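/- Let n ≥ 1 be a natural number, a, b ∈ ℂ, and let F(z) = z^n + a/z^n + b (extended to a total function on ℂ using the convention a/0 = 0). Let B = {z ∈ ℂ : the forward orbit {F^[m](z) : m ∈ ℕ} is a bounded subset of ℂ}. Then for every ζ ∈ ℂ with ζ^n = 1 and |ζ| = 1, and every z ∈ ℂ, one has z ∈ B if and only if ζ·z ∈ B. -/

import Mathlib

/-- The set of points with bounded forward orbit under the generalized McMullen map
`F(z) = z^n + a/z^n + b` (with the convention `a/0 = 0`) is invariant under
multiplication by an `n`-th root of unity of modulus one. -/
theorem mcmullen_bounded_orbit_symmetry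
    (n : ℕ) (hn : 1 ≤ n) (a b : ℂ)
    (F : ℂ → ℂ) (hF : ∀ z : ℂ, F z = z ^ n + a / z ^ n + b)
    (B : Set ℂ)
    (hB : B = {z : ℂ | Bornology.IsBounded (Set.range fun m : ℕ => F^[m] z)}) :
    ∀ ζ : ℂ, ζ ^ n = 1 → ‖ζ‖ = 1 → ∀ z : ℂ, (z ∈ B ↔ ζ * z ∈ B) := by
  intro ζ hζ _ z
  have key : F (ζ * z) = F z := by
    rw [hF, hF, mul_pow, hζ, one_mul]
  have iter : ∀ m : ℕ, 1 ≤ m → F^[m] (ζ * z) = F^[m] z := by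
    intro m hm
    obtain ⟨k, rfl⟩ := Nat.exists_eq_add_of_le hm
    rw [add_comm, Function.iterate_add_apply, Function.iterate_add_apply,
      Function.iterate_one, key]
  subst hB
  simp only [Set.mem_setOf_eq]
  constructor
  · intro h
    have : Set.range (fun m : ℕ => F^[m] (ζ * z)) ⊆
        insert (ζ * z) (Set.range fun m : ℕ => F^[m] z) := by
      rintro w ⟨m, rfl⟩
      rcases Nat.eq_zero_or_pos m with rfl | hm
      · simp
      · exact Set.mem_insert_of_mem _ ⟨m, (iter m hm).symm⟩
    exact (h.insert _).subset this
  · intro h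
    have : Set.range (fun m : ℕ => F^[m] z) ⊆
        insert z (Set.range fun m : ℕ => F^[m] (ζ * z)) := by
      rintro w ⟨m, rfl⟩
      rcases Nat.eq_zero_or_pos m with rfl | hm
      · simp
      · exact Set.mem_insert_of_mem _ ⟨m, iter m hm⟩
    exact (h.insert _).subset this
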